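/- Let ρ be a PPT state on ℂ²⊗ℂ²⊗ℂᴺ such that dim ker(ρ) + dim ker(ρ^{t_A}) + dim ker(ρ^{t_B}) + dim ker(ρ^{t_{AB}}) ≤ N − 1 (equivalently, rank(ρ) + rank(ρ^{t_A}) + rank(ρ^{t_B}) + rank(ρ^{t_{AB}}) ≥ 15N + 1). Then for every pair of nonzero vectors e, f ∈ ℂ² there exists a nonzero vector g ∈ ℂᴺ such that e⊗f⊗g ∈ Range(ρ), ē⊗f⊗g ∈ Range(ρ^{t_A}), e⊗f̄⊗g ∈ Range(ρ^{t_B}) and ē⊗f̄⊗g ∈ Range(ρ^{t_{AB}}), where ·̄ denotes entrywise complex conjugation. -/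
import Mathlib


open Matrix BigOperators ComplexOrder

noncomputable section

/-- Partial transpose with respect to Alice (the first `Fin 2` factor). -/
def ptA {N : ℕ} (ρ : Matrix (Fin 2 × Fin 2 × Fin N) (Fin 2 × Fin 2 × Fin N) ℂ) :
    Matrix (Fin 2 × Fin 2 × Fin N) (Fin 2 × Fin 2 × Fin N) ℂ :=
  fun x y => ρ (y.1, x.2.1, x.2.2) (x.1, y.2.1, y.2.2)

/-- Partial transpose with respect to Bob (the second `Fin 2` factor). -/
def ptB {N : ℕ} (ρ : Matrix (Fin 2 × Fin 2 × Fin N) (Fin 2 × Fin 2 × Fin N) ℂ) :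
    Matrix (Fin 2 × Fin 2 × Fin N) (Fin 2 × Fin 2 × Fin N) ℂ :=
  fun x y => ρ (x.1, y.2.1, x.2.2) (y.1, x.2.1, y.2.2)

/-- Partial transpose with respect to Alice and Bob. -/
def ptAB {N : ℕ} (ρ : Matrix (Fin 2 × Fin 2 × Fin N) (Fin 2 × Fin 2 × Fin N) ℂ) :
    Matrix (Fin 2 × Fin 2 × Fin N) (Fin 2 × Fin 2 × Fin N) ℂ :=
  ptB (ptA ρ)

/-- PPT: all partial transposes are positive semidefinite. -/
def IsPPT {N : ℕ} (ρ : Matrix (Fin 2 × Fin 2 × Fin N) (Fin 2 × Fin 2 × Fin N) ℂ) : Prop :=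
  (ptA ρ).PosSemidef ∧ (ptB ρ).PosSemidef ∧ (ptAB ρ).PosSemidef

/-- The product vector `e ⊗ f ⊗ g`. -/
def prodVec {N : ℕ} (e f : Fin 2 → ℂ) (g : Fin N → ℂ) : Fin 2 × Fin 2 × Fin N → ℂ :=
  fun x => e x.1 * f x.2.1 * g x.2.2

/-- The rank-one outer product `v v†`. -/
def outer {n : Type*} (v : n → ℂ) : Matrix n n ℂ := Matrix.vecMulVec v (star v)

/-- Full separability of a tripartite state. -/
def SeparableState {N : ℕ} (ρ : Matrix (Fin 2 × Fin 2 × Fin N) (Fin 2 × Fin 2 × Fin N) ℂ) : Prop :=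
  ∃ (k : ℕ) (p : Fin k → ℝ) (e f : Fin k → Fin 2 → ℂ) (g : Fin k → Fin N → ℂ),
    (∀ i, 0 ≤ p i) ∧
    ρ = ∑ i, (p i : ℂ) • outer (prodVec (e i) (f i) (g i))

/-- Reduced matrix of Alice. -/
def redA {N : ℕ} (ρ : Matrix (Fin 2 × Fin 2 × Fin N) (Fin 2 × Fin 2 × Fin N) ℂ) :
    Matrix (Fin 2) (Fin 2) ℂ :=
  fun a a' => ∑ b : Fin 2, ∑ c : Fin N, ρ (a, b, c) (a', b, c)

/-- Reduced matrix of Bob. -/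
def redB {N : ℕ} (ρ : Matrix (Fin 2 × Fin 2 × Fin N) (Fin 2 × Fin 2 × Fin N) ℂ) :
    Matrix (Fin 2) (Fin 2) ℂ :=
  fun b b' => ∑ a : Fin 2, ∑ c : Fin N, ρ (a, b, c) (a, b', c)

/-- Reduced matrix of Charlie. -/
def redC {N : ℕ} (ρ : Matrix (Fin 2 × Fin 2 × Fin N) (Fin 2 × Fin 2 × Fin N) ℂ) :
    Matrix (Fin N) (Fin N) ℂ :=
  fun c c' => ∑ a : Fin 2, ∑ b : Fin 2, ρ (a, b, c) (a, b, c')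

/-- `ρ` is supported on `ℂ² ⊗ ℂ² ⊗ ℂᴺ`: all single-party reduced matrices have full rank. -/
def SupportedOn {N : ℕ} (ρ : Matrix (Fin 2 × Fin 2 × Fin N) (Fin 2 × Fin 2 × Fin N) ℂ) : Prop :=
  (redA ρ).rank = 2 ∧ (redB ρ).rank = 2 ∧ (redC ρ).rank = N

/-- The dimension of the kernel of a matrix. -/
def kerDim {N : ℕ} (ρ : Matrix (Fin 2 × Fin 2 × Fin N) (Fin 2 × Fin 2 × Fin N) ℂ) : ℕ :=
  Module.finrank ℂ (LinearMap.ker ρ.mulVecLin)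


/-- For a PSD matrix, any vector orthogonal to the kernel is in the range. -/
lemma psd_mem_range {n : Type*} [Fintype n] [DecidableEq n]
    (σ : Matrix n n ℂ) (hσ : σ.PosSemidef) (v : n → ℂ)
    (h : ∀ x, σ.mulVec x = 0 → star x ⬝ᵥ v = 0) : ∃ w, σ.mulVec w = v := by
  classical
  set R := LinearMap.range σ.mulVecLin with hR
  set K := LinearMap.ker σ.mulVecLin with hK
  have herm : σᴴ = σ := hσ.1
  have key : ∀ k, σ.mulVec k = 0 → ∀ w, star k ⬝ᵥ σ.mulVec w = 0 := by
    intro k hk w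
    have h1 : star k ⬝ᵥ σ.mulVec w = (star k ᵥ* σ) ⬝ᵥ w := Matrix.dotProduct_mulVec _ _ _
    have h2 : star k ᵥ* σ = star (σ.mulVec k) := by
      rw [Matrix.star_mulVec, herm]
    rw [h1, h2, hk]
    simp
  have hinf : R ⊓ K = ⊥ := by
    rw [eq_bot_iff]
    intro u hu
    obtain ⟨⟨w, hw⟩, hu2⟩ := hu
    rw [Matrix.mulVecLin_apply] at hw
    have hu0 : σ.mulVec u = 0 := hu2
    have : star u ⬝ᵥ u = 0 := by
      have h3 := key u hu0 w
      rw [hw] at h3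
      exact h3
    simp only [Submodule.mem_bot]
    exact dotProduct_star_self_eq_zero.mp this
  have hsup : R ⊔ K = ⊤ := by
    apply Submodule.eq_top_of_finrank_eq
    have h1 := Submodule.finrank_sup_add_finrank_inf_eq R K
    rw [hinf] at h1
    simp only [finrank_bot, add_zero] at h1
    rw [h1]
    exact LinearMap.finrank_range_add_finrank_ker σ.mulVecLin
  have hv : v ∈ R ⊔ K := hsup ▸ Submodule.mem_top
  obtain ⟨r, hr, k, hk, hrk⟩ := Submodule.mem_sup.mp hv
  obtain ⟨w, hw⟩ := hr
  rw [Matrix.mulVecLin_apply] at hw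
  have hk0 : σ.mulVec k = 0 := hk
  have hkv : star k ⬝ᵥ v = 0 := h k hk0
  have : star k ⬝ᵥ k = 0 := by
    have := key k hk0 w
    rw [hw] at this
    have hsum : star k ⬝ᵥ v = star k ⬝ᵥ r + star k ⬝ᵥ k := by
      rw [← hrk, dotProduct_add]
    rw [hkv, this, zero_add] at hsum
    exact hsum.symm
  have hkz : k = 0 := dotProduct_star_self_eq_zero.mp this
  exact ⟨w, by rw [hw, ← hrk, hkz, add_zero]⟩

/-- Bilinear pairing used for the dimension count. -/
def pairing {N : ℕ} (e' f' : Fin 2 → ℂ)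
    (K : Submodule ℂ (Fin 2 × Fin 2 × Fin N → ℂ)) :
    (Fin N → ℂ) →ₗ[ℂ] (K →ₗ[ℂ] ℂ) where
  toFun h :=
    { toFun := fun x => (x : Fin 2 × Fin 2 × Fin N → ℂ) ⬝ᵥ prodVec e' f' h
      map_add' := by intro x y; simp [add_dotProduct]
      map_smul' := by intro c x; simp [smul_dotProduct] }
  map_add' := by
    intro h1 h2
    ext x
    have hp : prodVec e' f' (h1 + h2) = prodVec e' f' h1 + prodVec e' f' h2 := by
      funext p; simp [prodVec, mul_add]
    simp only [LinearMap.coe_mk, AddHom.coe_mk, LinearMap.add_apply]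
    rw [hp, dotProduct_add]
  map_smul' := by
    intro c h
    ext x
    have hp : prodVec e' f' (c • h) = c • prodVec e' f' h := by
      funext p; simp [prodVec]; ring
    simp only [LinearMap.coe_mk, AddHom.coe_mk, RingHom.id_apply, LinearMap.smul_apply,
      smul_eq_mul]
    rw [hp, dotProduct_smul, smul_eq_mul]

lemma star_prodVec {N : ℕ} (e f : Fin 2 → ℂ) (g : Fin N → ℂ) :
    star (prodVec e f g) = prodVec (star e) (star f) (star g) := by
  funext p
  simp [prodVec, mul_comm, mul_assoc, mul_left_comm]

set_option maxHeartbeats 1000000 in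
set_option synthInstance.maxHeartbeats 1000000 in
/-- If the kernels of a PPT state and of its partial transposes together have dimension at
most `N - 1`, then for every pair of nonzero `e, f ∈ ℂ²` there is a nonzero `g ∈ ℂᴺ` such
that `e⊗f⊗g`, `ē⊗f⊗g`, `e⊗f̄⊗g`, `ē⊗f̄⊗g` lie in the respective ranges. -/
theorem product_vectors_in_ranges (N : ℕ)
    (ρ : Matrix (Fin 2 × Fin 2 × Fin N) (Fin 2 × Fin 2 × Fin N) ℂ)
    (hpos : ρ.PosSemidef) (hppt : IsPPT ρ)
    (hker : kerDim ρ + kerDim (ptA ρ) + kerDim (ptB ρ) + kerDim (ptAB ρ) + 1 ≤ N) :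
    ∀ e f : Fin 2 → ℂ, e ≠ 0 → f ≠ 0 →
      ∃ g : Fin N → ℂ, g ≠ 0 ∧
        (∃ w, ρ.mulVec w = prodVec e f g) ∧
        (∃ w, (ptA ρ).mulVec w = prodVec (star e) f g) ∧
        (∃ w, (ptB ρ).mulVec w = prodVec e (star f) g) ∧
        (∃ w, (ptAB ρ).mulVec w = prodVec (star e) (star f) g) := by
  intro e f he hf
  classical
  set K0 := LinearMap.ker ρ.mulVecLin with hK0
  set K1 := LinearMap.ker (ptA ρ).mulVecLin with hK1
  set K2 := LinearMap.ker (ptB ρ).mulVecLin with hK2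
  set K3 := LinearMap.ker (ptAB ρ).mulVecLin with hK3
  haveI i0 : Module.Finite ℂ (K0 →ₗ[ℂ] ℂ) := Module.Finite.linearMap ℂ ℂ _ _
  haveI i1 : Module.Finite ℂ (K1 →ₗ[ℂ] ℂ) := Module.Finite.linearMap ℂ ℂ _ _
  haveI i2 : Module.Finite ℂ (K2 →ₗ[ℂ] ℂ) := Module.Finite.linearMap ℂ ℂ _ _
  haveI i3 : Module.Finite ℂ (K3 →ₗ[ℂ] ℂ) := Module.Finite.linearMap ℂ ℂ _ _
  -- the combined pairing map
  set F : (Fin N → ℂ) →ₗ[ℂ]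
      ((K0 →ₗ[ℂ] ℂ) × (K1 →ₗ[ℂ] ℂ) × (K2 →ₗ[ℂ] ℂ) × (K3 →ₗ[ℂ] ℂ)) :=
    (pairing (star e) (star f) K0).prod
      ((pairing e (star f) K1).prod
        ((pairing (star e) f K2).prod (pairing e f K3))) with hF
  have hrankP : Module.finrank ℂ
      ((K0 →ₗ[ℂ] ℂ) × (K1 →ₗ[ℂ] ℂ) × (K2 →ₗ[ℂ] ℂ) × (K3 →ₗ[ℂ] ℂ))
      = kerDim ρ + kerDim (ptA ρ) + kerDim (ptB ρ) + kerDim (ptAB ρ) := by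
    rw [Module.finrank_prod, Module.finrank_prod, Module.finrank_prod]
    rw [Subspace.dual_finrank_eq, Subspace.dual_finrank_eq, Subspace.dual_finrank_eq,
      Subspace.dual_finrank_eq]
    simp only [kerDim, hK0, hK1, hK2, hK3]
    ring
  have hkerF : LinearMap.ker F ≠ ⊥ := by
    intro hbot
    have h1 := LinearMap.finrank_range_add_finrank_ker F
    rw [hbot, finrank_bot, add_zero, Module.finrank_fin_fun] at h1
    have h2 : Module.finrank ℂ (LinearMap.range F) ≤
        Module.finrank ℂ ((K0 →ₗ[ℂ] ℂ) × (K1 →ₗ[ℂ] ℂ) × (K2 →ₗ[ℂ] ℂ) × (K3 →ₗ[ℂ] ℂ)) :=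
      Submodule.finrank_le _
    rw [hrankP] at h2
    omega
  obtain ⟨h, hhF, hh0⟩ := Submodule.exists_mem_ne_zero_of_ne_bot hkerF
  have hFh : F h = 0 := hhF
  refine ⟨star h, fun hz => hh0 (by simpa using congrArg star hz), ?_, ?_, ?_, ?_⟩
  · apply psd_mem_range ρ hpos
    intro x hx
    have := congrArg (fun p => p.1 ⟨x, hx⟩) hFh
    simp only [hF, LinearMap.prod_apply, Pi.prod, LinearMap.zero_apply, Prod.fst] at this
    have hpair : x ⬝ᵥ prodVec (star e) (star f) h = 0 := this
    have : star x ⬝ᵥ prodVec e f (star h) =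
        star (x ⬝ᵥ prodVec (star e) (star f) h) := by
      rw [Matrix.star_dotProduct, star_prodVec, dotProduct_comm]
      simp only [star_star]
    rw [this, hpair, star_zero]
  · apply psd_mem_range (ptA ρ) hppt.1
    intro x hx
    have := congrArg (fun p => p.2.1 ⟨x, hx⟩) hFh
    simp only [hF, LinearMap.prod_apply, Pi.prod, LinearMap.zero_apply] at this
    have hpair : x ⬝ᵥ prodVec e (star f) h = 0 := this
    have heq : star x ⬝ᵥ prodVec (star e) f (star h) =
        star (x ⬝ᵥ prodVec e (star f) h) := by
      rw [Matrix.star_dotProduct, star_prodVec, dotProduct_comm]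
      simp only [star_star]
    rw [heq, hpair, star_zero]
  · apply psd_mem_range (ptB ρ) hppt.2.1
    intro x hx
    have := congrArg (fun p => p.2.2.1 ⟨x, hx⟩) hFh
    simp only [hF, LinearMap.prod_apply, Pi.prod, LinearMap.zero_apply] at this
    have hpair : x ⬝ᵥ prodVec (star e) f h = 0 := this
    have heq : star x ⬝ᵥ prodVec e (star f) (star h) =
        star (x ⬝ᵥ prodVec (star e) f h) := by
      rw [Matrix.star_dotProduct, star_prodVec, dotProduct_comm]
      simp only [star_star]
    rw [heq, hpair, star_zero]
  · apply psd_mem_range (ptAB ρ) hppt.2.2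
    intro x hx
    have := congrArg (fun p => p.2.2.2 ⟨x, hx⟩) hFh
    simp only [hF, LinearMap.prod_apply, Pi.prod, LinearMap.zero_apply] at this
    have hpair : x ⬝ᵥ prodVec e f h = 0 := this
    have heq : star x ⬝ᵥ prodVec (star e) (star f) (star h) =
        star (x ⬝ᵥ prodVec e f h) := by
      rw [Matrix.star_dotProduct, star_prodVec, dotProduct_comm]
      simp only [star_star]
    rw [heq, hpair, star_zero]

end
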